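/- Let R be a commutative Noetherian ring and M a finitely generated R-module. Then M is projective if and only if for every prime ideal p of R the localized module M_p is a free module over the local ring R_p. -/
import Mathlib

/-- A finitely generated module over a commutative Noetherian ring is projective if and only if
its localization at every prime ideal is a free module over the corresponding local ring. -/
theorem projective_iff_locally_free
    (R : Type*) [CommRing R] [IsNoetherianRing R]
    (M : Type*) [AddCommGroup M] [Module R M] [Module.Finite R M] :
    Module.Projective R M ↔
      ∀ (p : Ideal R) [p.IsPrime],
        Module.Free (Localization.AtPrime p) (LocalizedModule p.primeCompl M) := by
  have hfp : Module.FinitePresentation R M := Module.finitePresentation_of_finite R M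
  constructor
  · intro hP p hp
    have : Module.Projective (Localization.AtPrime p) (LocalizedModule p.primeCompl M) :=
      Module.projective_of_isLocalizedModule p.primeCompl
        (LocalizedModule.mkLinearMap p.primeCompl M)
    have : Module.Finite (Localization.AtPrime p) (LocalizedModule p.primeCompl M) :=
      Module.Finite.of_isLocalizedModule p.primeCompl
        (LocalizedModule.mkLinearMap p.primeCompl M)
    have : Module.FinitePresentation (Localization.AtPrime p) (LocalizedModule p.primeCompl M) :=
      Module.finitePresentation_of_projective _ _
    exact Module.free_of_flat_of_isLocalRing
  · intro H
    apply Module.projective_of_localization_maximal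
    intro I hI
    have : I.IsPrime := hI.isPrime
    have := H I
    infer_instance
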